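/- Let B and C be bounded linear operators on H admitting A-adjoints B♯ and C♯. Then for every nonzero complex number α, (w_{A,e}(B,C))² ≤ ( max{1, |1 − α|}·‖(B,C)‖_{A,e}·‖(B♯,C♯)‖_{A,e} + w_A(B²) + w_A(C²) ) / |α|. -/

import Mathlib

noncomputable section

open scoped ComplexInnerProductSpace

variable {H : Type*} [NormedAddCommGroup H] [InnerProductSpace ℂ H] [CompleteSpace H]

/-- The semi-inner product induced by a positive operator `A`:
`⟨x,y⟩_A = ⟨Ax,y⟩` (linear in the first argument, following the paper's convention). -/
def innerA (A : H →L[ℂ] H) (x y : H) : ℂ := ⟪y, A x⟫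

/-- The seminorm induced by `A`: `‖x‖_A = ⟨Ax,x⟩^{1/2}`. -/
def normA (A : H →L[ℂ] H) (x : H) : ℝ := Real.sqrt (innerA A x x).re

/-- The `A`-numerical radius `w_A(T) = sup { |⟨Tx,x⟩_A| : ‖x‖_A = 1 }`. -/
def wA (A T : H →L[ℂ] H) : ℝ :=
  sSup {r : ℝ | ∃ x : H, normA A x = 1 ∧ r = ‖innerA A (T x) x‖}

/-- The `A`-Crawford number `c_A(T) = inf { |⟨Tx,x⟩_A| : ‖x‖_A = 1 }`. -/
def cA (A T : H →L[ℂ] H) : ℝ :=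
  sInf {r : ℝ | ∃ x : H, normA A x = 1 ∧ r = ‖innerA A (T x) x‖}

/-- The `A`-operator seminorm `‖T‖_A = sup { ‖Tx‖_A : ‖x‖_A = 1 }`. -/
def opNormA (A T : H →L[ℂ] H) : ℝ :=
  sSup {r : ℝ | ∃ x : H, normA A x = 1 ∧ r = normA A (T x)}

/-- The `A`-Euclidean operator radius of the pair `(B, C)`. -/
def wAe (A B C : H →L[ℂ] H) : ℝ :=
  sSup {r : ℝ | ∃ x : H, normA A x = 1 ∧
    r = Real.sqrt ((‖innerA A (B x) x‖)^2 + (‖innerA A (C x) x‖)^2)}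

/-- The `A`-Euclidean operator seminorm of the pair `(B, C)`. -/
def normAe (A B C : H →L[ℂ] H) : ℝ :=
  sSup {r : ℝ | ∃ x : H, normA A x = 1 ∧
    r = Real.sqrt ((normA A (B x))^2 + (normA A (C x))^2)}

/-- `Re_A(T) = (T + T♯)/2`, where `Ts` is an `A`-adjoint of `T`. -/
def ReA (T Ts : H →L[ℂ] H) : H →L[ℂ] H := (2 : ℂ)⁻¹ • (T + Ts)

/-- `Im_A(T) = (T - T♯)/(2i)`, where `Ts` is an `A`-adjoint of `T`. -/
def ImA (T Ts : H →L[ℂ] H) : H →L[ℂ] H := (2 * Complex.I)⁻¹ • (T - Ts)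

lemma two_cs {a b c d : ℝ} (ha : 0 ≤ a) (hb : 0 ≤ b) (hc : 0 ≤ c) (hd : 0 ≤ d) :
    a * c + b * d ≤ Real.sqrt (a^2 + b^2) * Real.sqrt (c^2 + d^2) := by
  have h1 := Real.sq_sqrt (by positivity : (0:ℝ) ≤ a^2 + b^2)
  have h2 := Real.sq_sqrt (by positivity : (0:ℝ) ≤ c^2 + d^2)
  have h3 := Real.sqrt_nonneg (a^2+b^2)
  have h4 := Real.sqrt_nonneg (c^2+d^2)
  nlinarith [sq_nonneg (a*d - b*c), mul_nonneg h3 h4, mul_nonneg (mul_nonneg ha hc) (mul_nonneg hb hd)]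

lemma buzano {e u v : H} (he : ‖e‖ = 1) (huv : ⟪e, v⟫ = starRingEnd ℂ ⟪e, u⟫) (α : ℂ) :
    ‖α‖ * ‖⟪e, u⟫‖ ^ 2
      ≤ ‖⟪v, u⟫‖ + max 1 (‖1 - α‖) * (‖u‖ * ‖v‖) := by
  set b : ℂ := ⟪e, u⟫ with hb
  set u' : H := u - b • e with hu'
  set v' : H := v - ⟪e, v⟫ • e with hv'
  have hee : ⟪e, e⟫ = 1 := by
    rw [inner_self_eq_norm_sq_to_K, he]; norm_num
  have h1 : ⟪e, u'⟫ = 0 := by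
    simp [hu', inner_sub_right, inner_smul_right, hee, he, hb]
  have h2 : ⟪e, v'⟫ = 0 := by
    simp [hv', inner_sub_right, inner_smul_right, hee, he]
  have hve : ⟪v, e⟫ = b := by
    rw [← inner_conj_symm, huv, Complex.conj_conj]
  have hcev : (starRingEnd ℂ) ⟪e, v⟫ = b := by rw [huv, Complex.conj_conj]
  have hsplit : ⟪v', u'⟫ = ⟪v, u⟫ - b * b := by
    simp only [hu', hv', inner_sub_left, inner_sub_right, inner_smul_left, inner_smul_right,
      hee, hve, hcev]
    ring
  have key : α * (b * b) = ⟪v, u⟫ - ⟪v', u'⟫ - (1 - α) * (b * b) := by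
    rw [hsplit]; ring
  have habs : ‖α‖ * ‖b‖ ^ 2
      ≤ ‖⟪v, u⟫‖ + ‖v'‖ * ‖u'‖ + ‖1 - α‖ * ‖b‖ ^ 2 := by
    have e1 : ‖α‖ * ‖b‖ ^ 2 = ‖α * (b * b)‖ := by
      rw [norm_mul, norm_mul]; ring
    rw [e1, key]
    have t1 : ‖⟪v, u⟫ - ⟪v', u'⟫ - (1 - α) * (b * b)‖
        ≤ ‖⟪v, u⟫‖ + ‖⟪v', u'⟫‖ + ‖(1 - α) * (b * b)‖ := by
      calc ‖⟪v, u⟫ - ⟪v', u'⟫ - (1 - α) * (b * b)‖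
          ≤ ‖⟪v, u⟫ - ⟪v', u'⟫‖ + ‖(1 - α) * (b * b)‖ := norm_sub_le _ _
        _ ≤ ‖⟪v, u⟫‖ + ‖⟪v', u'⟫‖ + ‖(1 - α) * (b * b)‖ := by
            have := norm_sub_le ⟪v, u⟫ ⟪v', u'⟫; linarith
    refine t1.trans ?_
    have t2 : ‖⟪v', u'⟫‖ ≤ ‖v'‖ * ‖u'‖ := by
      exact norm_inner_le_norm _ _
    have t3 : ‖(1 - α) * (b * b)‖ = ‖1 - α‖ * ‖b‖ ^ 2 := by
      rw [norm_mul, norm_mul]; ring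
    rw [t3]; linarith
  have hu2 : ‖u‖^2 = ‖b‖ ^ 2 + ‖u'‖^2 := by
    have hu : u = u' + b • e := by rw [hu']; abel
    have hiu : ⟪u', b • e⟫ = 0 := by
      have hu'e : ⟪u', e⟫ = 0 := by rw [← inner_conj_symm, h1]; simp
      rw [inner_smul_right, hu'e, mul_zero]
    rw [hu, @norm_add_sq ℂ, hiu]
    simp [norm_smul, he]
    ring
  have hv2 : ‖v‖^2 = ‖b‖ ^ 2 + ‖v'‖^2 := by
    have hv : v = v' + ⟪e, v⟫ • e := by rw [hv']; abel
    have hiv : ⟪v', ⟪e, v⟫ • e⟫ = 0 := by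
      have hv'e : ⟪v', e⟫ = 0 := by rw [← inner_conj_symm, h2]; simp
      rw [inner_smul_right, hv'e, mul_zero]
    have habv : ‖(⟪e, v⟫ : ℂ)‖ = ‖b‖ := by
      rw [huv, Complex.norm_conj]
    rw [hv, @norm_add_sq ℂ, hiv]
    simp [norm_smul, he, habv]
    ring
  have hcs : ‖b‖ * ‖b‖ + ‖u'‖ * ‖v'‖ ≤ ‖u‖ * ‖v‖ := by
    have := two_cs (a := ‖b‖) (b := ‖u'‖) (c := ‖b‖) (d := ‖v'‖)
      (by positivity) (norm_nonneg _) (by positivity) (norm_nonneg _)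
    have eu : Real.sqrt (‖b‖ ^ 2 + ‖u'‖^2) = ‖u‖ := by
      rw [← hu2, Real.sqrt_sq (norm_nonneg _)]
    have ev : Real.sqrt (‖b‖ ^ 2 + ‖v'‖^2) = ‖v‖ := by
      rw [← hv2, Real.sqrt_sq (norm_nonneg _)]
    rw [eu, ev] at this
    linarith
  have hM1 : (1:ℝ) ≤ max 1 (‖1 - α‖) := le_max_left _ _
  have hM2 : ‖1 - α‖ ≤ max 1 (‖1 - α‖) := le_max_right _ _
  have hb2 : (0:ℝ) ≤ ‖b‖ ^ 2 := by positivity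
  nlinarith [mul_nonneg (norm_nonneg u') (norm_nonneg v'), norm_nonneg b]

open ContinuousLinearMap in
lemma swapA {A T Ts : H →L[ℂ] H} (hAsa : IsSelfAdjoint A)
    (h : A * Ts = star T * A) : A * T = star Ts * A := by
  have := congrArg star h
  rw [star_mul, star_mul, star_star, hAsa.star_eq] at this
  exact this.symm

open ContinuousLinearMap in
lemma stepA {A R T Ts : H →L[ℂ] H} (hAsa : IsSelfAdjoint A) (hRsa : IsSelfAdjoint R)
    (hR2 : R * R = A) (h : A * Ts = star T * A) (x : H) :
    ‖R (T x)‖ ^ 2 ≤ ‖R (Ts (T x))‖ * ‖R x‖ := by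
  have hAT : A * T = star Ts * A := swapA hAsa h
  have e1 : (‖R (T x)‖ : ℝ) ^ 2 = Complex.re ⟪R (T x), R (T x)⟫ := by
    have := inner_self_eq_norm_sq (𝕜 := ℂ) (R (T x))
    simpa using this.symm
  have hRmove : ∀ y z : H, ⟪R y, z⟫ = ⟪y, R z⟫ := fun y z => by
    conv_lhs => rw [← hRsa.star_eq, star_eq_adjoint, adjoint_inner_left]
  have e2 : ⟪R (T x), R (T x)⟫ = ⟪R (Ts (T x)), R x⟫ := by
    rw [hRmove]
    have : R (R (T x)) = A (T x) := by
      have := congrFun (congrArg DFunLike.coe hR2) (T x)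
      simpa [mul_apply] using this
    rw [this]
    have : A (T x) = (star Ts) (A x) := by
      have := congrFun (congrArg DFunLike.coe hAT) x
      simpa [mul_apply] using this
    rw [this, star_eq_adjoint, adjoint_inner_right]
    have hAx : A x = R (R x) := by
      have := congrFun (congrArg DFunLike.coe hR2) x
      simpa [mul_apply] using this.symm
    rw [hAx, ← hRmove]
  calc (‖R (T x)‖ : ℝ) ^ 2 = Complex.re ⟪R (Ts (T x)), R x⟫ := by rw [e1, e2]
    _ ≤ ‖(⟪R (Ts (T x)), R x⟫ : ℂ)‖ := Complex.re_le_norm _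
    _ ≤ ‖R (Ts (T x))‖ * ‖R x‖ := norm_inner_le_norm _ _

lemma powA {A P : H →L[ℂ] H} (hP : A * P = star P * A) : ∀ n : ℕ, A * P^n = star (P^n) * A := by
  intro n
  induction n with
  | zero => simp
  | succ n ih =>
    calc A * P^(n+1) = A * (P * P^n) := by rw [← pow_succ']
      _ = (star P * A) * P^n := by rw [← mul_assoc, hP]
      _ = star P * (star (P^n) * A) := by rw [mul_assoc, ih]
      _ = star (P^n * P) * A := by rw [star_mul, mul_assoc]
      _ = star (P^(n+1)) * A := by rw [← pow_succ]

open ContinuousLinearMap in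
lemma iterA {A R P : H →L[ℂ] H} (hAsa : IsSelfAdjoint A) (hRsa : IsSelfAdjoint R)
    (hR2 : R * R = A) (hP : A * P = star P * A) {x : H} (hx : ‖R x‖ = 1) :
    ‖R (P x)‖ ≤ ‖P‖ := by
  have key : ∀ n : ℕ, ‖R (P x)‖ ^ (2^n) ≤ ‖R ((P^(2^n)) x)‖ := by
    intro n
    induction n with
    | zero => simp
    | succ n ih =>
      have h1 : ‖R (P x)‖ ^ (2^(n+1)) = (‖R (P x)‖ ^ (2^n))^2 := by
        rw [← pow_mul, pow_succ]
      have h2 : (‖R (P x)‖ ^ (2^n))^2 ≤ ‖R ((P^(2^n)) x)‖^2 :=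
        pow_le_pow_left₀ (by positivity) ih 2
      have h3 := stepA hAsa hRsa hR2 (powA hP (2^n)) x
      rw [hx, mul_one] at h3
      have h4 : (P^(2^n)) ((P^(2^n)) x) = (P^(2^(n+1))) x := by
        have e : P^(2^(n+1)) = P^(2^n) * P^(2^n) := by
          rw [← pow_add]; congr 1; omega
        rw [e, ContinuousLinearMap.mul_apply]
      rw [h4] at h3
      calc ‖R (P x)‖ ^ (2^(n+1)) = (‖R (P x)‖ ^ (2^n))^2 := h1
        _ ≤ ‖R ((P^(2^n)) x)‖^2 := h2
        _ ≤ ‖R ((P^(2^(n+1))) x)‖ := h3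
  have hxne : x ≠ 0 := by
    rintro rfl; simp at hx
  have hRnn : 0 < ‖R‖ := by
    rcases eq_or_lt_of_le (norm_nonneg R) with h0 | h0
    · exfalso
      have : R = 0 := by rwa [eq_comm, norm_eq_zero] at h0
      rw [this] at hx; simp at hx
    · exact h0
  set c : ℝ := ‖R‖ * ‖x‖ with hc
  have hcpos : 0 < c := mul_pos hRnn (norm_pos_iff.mpr hxne)
  have bound : ∀ n : ℕ, ‖R (P x)‖ ≤ ‖P‖ * c ^ (((2:ℝ)^n)⁻¹) := by
    intro n
    set m : ℕ := 2^n with hm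
    have hmpos : 0 < m := Nat.pow_pos (by norm_num)
    have h5 : ‖R (P x)‖ ^ m ≤ ‖P‖ ^ m * c := by
      calc ‖R (P x)‖ ^ m ≤ ‖R ((P^m) x)‖ := key n
        _ ≤ ‖R‖ * ‖(P^m) x‖ := R.le_opNorm _
        _ ≤ ‖R‖ * (‖P^m‖ * ‖x‖) := by
            have := (P^m).le_opNorm x
            nlinarith [norm_nonneg R]
        _ ≤ ‖R‖ * (‖P‖^m * ‖x‖) := by
            have := norm_pow_le' P hmpos
            nlinarith [norm_nonneg x, norm_nonneg R, pow_nonneg (norm_nonneg P) m]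
        _ = ‖P‖ ^ m * c := by rw [hc]; ring
    have hmr : ((m : ℝ)) ≠ 0 := by positivity
    have h6 : (‖R (P x)‖ ^ m) ^ (((m:ℝ))⁻¹) ≤ (‖P‖ ^ m * c) ^ (((m:ℝ))⁻¹) :=
      Real.rpow_le_rpow (by positivity) h5 (by positivity)
    have e1 : (‖R (P x)‖ ^ m) ^ (((m:ℝ))⁻¹) = ‖R (P x)‖ := by
      rw [← Real.rpow_natCast (‖R (P x)‖) m, ← Real.rpow_mul (norm_nonneg _),
        mul_inv_cancel₀ hmr, Real.rpow_one]
    have e2 : (‖P‖ ^ m * c) ^ (((m:ℝ))⁻¹) = ‖P‖ * c ^ (((m:ℝ))⁻¹) := by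
      rw [Real.mul_rpow (by positivity) hcpos.le, ← Real.rpow_natCast (‖P‖) m,
        ← Real.rpow_mul (norm_nonneg _), mul_inv_cancel₀ hmr, Real.rpow_one]
    rw [e1, e2] at h6
    have e3 : ((m : ℝ)) = (2:ℝ)^n := by rw [hm]; push_cast; ring
    rwa [e3] at h6
  have h2inf : Filter.Tendsto (fun n : ℕ => (2:ℝ)^n) Filter.atTop Filter.atTop :=
    tendsto_pow_atTop_atTop_of_one_lt one_lt_two
  have hr0 : Filter.Tendsto (fun n : ℕ => ((2:ℝ)^n)⁻¹) Filter.atTop (nhds 0) :=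
    h2inf.inv_tendsto_atTop
  have hccont : ContinuousAt (fun r : ℝ => c ^ r) 0 :=
    Real.continuousAt_const_rpow hcpos.ne'
  have hlim : Filter.Tendsto (fun n : ℕ => c ^ (((2:ℝ)^n)⁻¹)) Filter.atTop (nhds 1) := by
    have := hccont.tendsto.comp hr0
    rwa [Real.rpow_zero] at this
  have hlim2 : Filter.Tendsto (fun n : ℕ => ‖P‖ * c ^ (((2:ℝ)^n)⁻¹)) Filter.atTop
      (nhds (‖P‖ * 1)) := hlim.const_mul _
  have := ge_of_tendsto hlim2 (Filter.Eventually.of_forall bound)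
  rwa [mul_one] at this

open ContinuousLinearMap in
lemma normA_bound {A R T Ts : H →L[ℂ] H} (hAsa : IsSelfAdjoint A) (hRsa : IsSelfAdjoint R)
    (hR2 : R * R = A) (h : A * Ts = star T * A) {x : H} (hx : ‖R x‖ = 1) :
    ‖R (T x)‖ ≤ Real.sqrt ‖Ts * T‖ := by
  have hP : A * (Ts * T) = star (Ts * T) * A := by
    rw [star_mul, ← mul_assoc, h, mul_assoc, swapA hAsa h, ← mul_assoc]
  have h1 := stepA hAsa hRsa hR2 h x
  rw [hx, mul_one] at h1
  have h2 : Ts (T x) = (Ts * T) x := rfl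
  rw [h2] at h1
  have h3 := iterA hAsa hRsa hR2 hP hx
  have : ‖R (T x)‖ ^ 2 ≤ ‖Ts * T‖ := h1.trans h3
  calc ‖R (T x)‖ = Real.sqrt (‖R (T x)‖ ^ 2) := (Real.sqrt_sq (norm_nonneg _)).symm
    _ ≤ Real.sqrt ‖Ts * T‖ := Real.sqrt_le_sqrt this

theorem stmt9 (A : H →L[ℂ] H) (hA : A.IsPositive) (hA0 : A ≠ 0)
    (B C Bs Cs : H →L[ℂ] H)
    (hB : A.comp Bs = (ContinuousLinearMap.adjoint B).comp A)
    (hC : A.comp Cs = (ContinuousLinearMap.adjoint C).comp A)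
    (α : ℂ) (hα : α ≠ 0) :
    (wAe A B C)^2
      ≤ (max 1 (‖1 - α‖) * normAe A B C * normAe A Bs Cs
          + wA A (B * B) + wA A (C * C)) / ‖α‖ := by
  have hAsa : IsSelfAdjoint A := hA.isSelfAdjoint
  have h0 : (0 : H →L[ℂ] H) ≤ A := (ContinuousLinearMap.nonneg_iff_isPositive A).mpr hA
  set M : ℝ := max 1 (‖1 - α‖) with hM
  have hM1 : (1:ℝ) ≤ M := le_max_left _ _
  have hM0 : (0:ℝ) ≤ M := by linarith
  set R : H →L[ℂ] H := CFC.sqrt A with hRdef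
  have hRsa : IsSelfAdjoint R := IsSelfAdjoint.of_nonneg (CFC.sqrt_nonneg A)
  have hR2 : R * R = A := CFC.sqrt_mul_sqrt_self A h0
  -- pointwise facts
  have hApp : ∀ u : H, A u = R (R u) := fun u => by
    have := congrFun (congrArg DFunLike.coe hR2) u
    simpa [ContinuousLinearMap.mul_apply] using this.symm
  have hRmove : ∀ y z : H, ⟪R y, z⟫ = ⟪y, R z⟫ := fun y z => by
    conv_lhs => rw [← hRsa.star_eq, ContinuousLinearMap.star_eq_adjoint,
      ContinuousLinearMap.adjoint_inner_left]
  have hAmove : ∀ y z : H, ⟪A y, z⟫ = ⟪y, A z⟫ := fun y z => by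
    conv_lhs => rw [← hAsa.star_eq, ContinuousLinearMap.star_eq_adjoint,
      ContinuousLinearMap.adjoint_inner_left]
  have hinner : ∀ u y : H, innerA A u y = ⟪R y, R u⟫ := fun u y => by
    rw [innerA, hApp u, ← hRmove]
  have hnorm : ∀ u : H, normA A u = ‖R u‖ := fun u => by
    have h1 := inner_self_eq_norm_sq (𝕜 := ℂ) (R u)
    rw [normA, hinner]
    have : (⟪R u, R u⟫ : ℂ).re = ‖R u‖^2 := by simpa using h1
    rw [this, Real.sqrt_sq (norm_nonneg _)]
  -- star-form hypotheses
  have hB' : A * Bs = star B * A := by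
    rw [ContinuousLinearMap.mul_def, ContinuousLinearMap.mul_def,
      ContinuousLinearMap.star_eq_adjoint]; exact hB
  have hC' : A * Cs = star C * A := by
    rw [ContinuousLinearMap.mul_def, ContinuousLinearMap.mul_def,
      ContinuousLinearMap.star_eq_adjoint]; exact hC
  have hBrev : A * B = star Bs * A := swapA hAsa hB'
  have hCrev : A * C = star Cs * A := swapA hAsa hC'
  have hBB : A * (Bs * Bs) = star (B * B) * A := by
    rw [star_mul, ← mul_assoc, hB', mul_assoc, hB', ← mul_assoc]
  have hCC : A * (Cs * Cs) = star (C * C) * A := by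
    rw [star_mul, ← mul_assoc, hC', mul_assoc, hC', ← mul_assoc]
  -- constants
  set cB : ℝ := Real.sqrt ‖Bs * B‖
  set cC : ℝ := Real.sqrt ‖Cs * C‖
  set cBs : ℝ := Real.sqrt ‖B * Bs‖
  set cCs : ℝ := Real.sqrt ‖C * Cs‖
  set cB2 : ℝ := Real.sqrt ‖(Bs * Bs) * (B * B)‖
  set cC2 : ℝ := Real.sqrt ‖(Cs * Cs) * (C * C)‖
  -- bounded-above facts
  have bddSwB : BddAbove {r : ℝ | ∃ x : H, normA A x = 1 ∧
      r = ‖innerA A ((B * B) x) x‖} := by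
    refine ⟨cB2, ?_⟩
    rintro r ⟨y, hy, rfl⟩
    have hRy : ‖R y‖ = 1 := by rw [← hnorm]; exact hy
    have h1 : ‖innerA A ((B * B) y) y‖ ≤ ‖R y‖ * ‖R ((B * B) y)‖ := by
      rw [hinner]; exact norm_inner_le_norm _ _
    rw [hRy, one_mul] at h1
    exact h1.trans (normA_bound hAsa hRsa hR2 hBB hRy)
  have bddSwC : BddAbove {r : ℝ | ∃ x : H, normA A x = 1 ∧
      r = ‖innerA A ((C * C) x) x‖} := by
    refine ⟨cC2, ?_⟩
    rintro r ⟨y, hy, rfl⟩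
    have hRy : ‖R y‖ = 1 := by rw [← hnorm]; exact hy
    have h1 : ‖innerA A ((C * C) y) y‖ ≤ ‖R y‖ * ‖R ((C * C) y)‖ := by
      rw [hinner]; exact norm_inner_le_norm _ _
    rw [hRy, one_mul] at h1
    exact h1.trans (normA_bound hAsa hRsa hR2 hCC hRy)
  have bddSnBC : BddAbove {r : ℝ | ∃ x : H, normA A x = 1 ∧
      r = Real.sqrt ((normA A (B x))^2 + (normA A (C x))^2)} := by
    refine ⟨Real.sqrt (cB^2 + cC^2), ?_⟩
    rintro r ⟨y, hy, rfl⟩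
    have hRy : ‖R y‖ = 1 := by rw [← hnorm]; exact hy
    have h1 := normA_bound hAsa hRsa hR2 hB' hRy
    have h2 := normA_bound hAsa hRsa hR2 hC' hRy
    apply Real.sqrt_le_sqrt
    rw [hnorm, hnorm]
    have g1 := pow_le_pow_left₀ (norm_nonneg (R (B y))) h1 2
    have g2 := pow_le_pow_left₀ (norm_nonneg (R (C y))) h2 2
    linarith
  have bddSnBsCs : BddAbove {r : ℝ | ∃ x : H, normA A x = 1 ∧
      r = Real.sqrt ((normA A (Bs x))^2 + (normA A (Cs x))^2)} := by
    refine ⟨Real.sqrt (cBs^2 + cCs^2), ?_⟩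
    rintro r ⟨y, hy, rfl⟩
    have hRy : ‖R y‖ = 1 := by rw [← hnorm]; exact hy
    have h1 := normA_bound hAsa hRsa hR2 hBrev hRy
    have h2 := normA_bound hAsa hRsa hR2 hCrev hRy
    apply Real.sqrt_le_sqrt
    rw [hnorm, hnorm]
    have g1 := pow_le_pow_left₀ (norm_nonneg (R (Bs y))) h1 2
    have g2 := pow_le_pow_left₀ (norm_nonneg (R (Cs y))) h2 2
    linarith
  -- nonnegativity of the suprema
  have hnBC0 : 0 ≤ normAe A B C := by
    apply Real.sSup_nonneg
    rintro r ⟨y, hy, rfl⟩; positivity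
  have hnBsCs0 : 0 ≤ normAe A Bs Cs := by
    apply Real.sSup_nonneg
    rintro r ⟨y, hy, rfl⟩; positivity
  have hw10 : 0 ≤ wA A (B * B) := by
    apply Real.sSup_nonneg
    rintro r ⟨y, hy, rfl⟩; positivity
  have hw20 : 0 ≤ wA A (C * C) := by
    apply Real.sSup_nonneg
    rintro r ⟨y, hy, rfl⟩; positivity
  set K : ℝ := M * normAe A B C * normAe A Bs Cs + wA A (B * B) + wA A (C * C) with hK
  have hK0 : 0 ≤ K := by
    have : 0 ≤ M * normAe A B C * normAe A Bs Cs := by positivity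
    linarith
  have habsα : 0 < ‖α‖ := norm_pos_iff.mpr hα
  have hKd0 : 0 ≤ K / ‖α‖ := div_nonneg hK0 habsα.le
  -- main estimate
  have hsup : wAe A B C ≤ Real.sqrt (K / ‖α‖) := by
    apply Real.sSup_le _ (Real.sqrt_nonneg _)
    rintro r ⟨x, hx1, rfl⟩
    apply Real.sqrt_le_sqrt
    rw [le_div_iff₀ habsα]
    have hRx : ‖R x‖ = 1 := by rw [← hnorm]; exact hx1
    -- Buzano hypotheses for B
    have hABsx : A (Bs x) = (ContinuousLinearMap.adjoint B) (A x) := by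
      have := congrFun (congrArg DFunLike.coe hB) x
      simpa using this
    have hACsx : A (Cs x) = (ContinuousLinearMap.adjoint C) (A x) := by
      have := congrFun (congrArg DFunLike.coe hC) x
      simpa using this
    have huvB : ⟪R x, R (Bs x)⟫ = starRingEnd ℂ ⟪R x, R (B x)⟫ := by
      rw [← hinner (Bs x) x, ← hinner (B x) x, innerA, innerA, hABsx,
        ContinuousLinearMap.adjoint_inner_right, ← inner_conj_symm]
      congr 1
      exact hAmove x (B x)
    have huvC : ⟪R x, R (Cs x)⟫ = starRingEnd ℂ ⟪R x, R (C x)⟫ := by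
      rw [← hinner (Cs x) x, ← hinner (C x) x, innerA, innerA, hACsx,
        ContinuousLinearMap.adjoint_inner_right, ← inner_conj_symm]
      congr 1
      exact hAmove x (C x)
    have hvuB : ⟪R (Bs x), R (B x)⟫ = innerA A ((B * B) x) x := by
      calc ⟪R (Bs x), R (B x)⟫ = ⟪Bs x, A (B x)⟫ := by
            rw [← hinner (B x) (Bs x), innerA]
        _ = ⟪A (Bs x), B x⟫ := (hAmove (Bs x) (B x)).symm
        _ = ⟪(ContinuousLinearMap.adjoint B) (A x), B x⟫ := by rw [hABsx]
        _ = ⟪A x, B (B x)⟫ := ContinuousLinearMap.adjoint_inner_left B _ _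
        _ = ⟪x, A (B (B x))⟫ := hAmove _ _
        _ = innerA A ((B * B) x) x := by rw [innerA, ContinuousLinearMap.mul_apply]
    have hvuC : ⟪R (Cs x), R (C x)⟫ = innerA A ((C * C) x) x := by
      calc ⟪R (Cs x), R (C x)⟫ = ⟪Cs x, A (C x)⟫ := by
            rw [← hinner (C x) (Cs x), innerA]
        _ = ⟪A (Cs x), C x⟫ := (hAmove (Cs x) (C x)).symm
        _ = ⟪(ContinuousLinearMap.adjoint C) (A x), C x⟫ := by rw [hACsx]
        _ = ⟪A x, C (C x)⟫ := ContinuousLinearMap.adjoint_inner_left C _ _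
        _ = ⟪x, A (C (C x))⟫ := hAmove _ _
        _ = innerA A ((C * C) x) x := by rw [innerA, ContinuousLinearMap.mul_apply]
    have hBz := buzano hRx huvB α
    have hCz := buzano hRx huvC α
    rw [hvuB] at hBz
    rw [hvuC] at hCz
    -- numerical radius bounds
    have hw1 : ‖innerA A ((B * B) x) x‖ ≤ wA A (B * B) :=
      le_csSup bddSwB ⟨x, hx1, rfl⟩
    have hw2 : ‖innerA A ((C * C) x) x‖ ≤ wA A (C * C) :=
      le_csSup bddSwC ⟨x, hx1, rfl⟩
    -- Euclidean seminorm bounds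
    have hn1 : Real.sqrt (‖R (B x)‖^2 + ‖R (C x)‖^2) ≤ normAe A B C :=
      le_csSup bddSnBC ⟨x, hx1, by rw [hnorm, hnorm]⟩
    have hn2 : Real.sqrt (‖R (Bs x)‖^2 + ‖R (Cs x)‖^2) ≤ normAe A Bs Cs :=
      le_csSup bddSnBsCs ⟨x, hx1, by rw [hnorm, hnorm]⟩
    have hprod : ‖R (B x)‖ * ‖R (Bs x)‖ + ‖R (C x)‖ * ‖R (Cs x)‖
        ≤ normAe A B C * normAe A Bs Cs := by
      have h1 := two_cs (norm_nonneg (R (B x))) (norm_nonneg (R (C x)))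
        (norm_nonneg (R (Bs x))) (norm_nonneg (R (Cs x)))
      refine h1.trans ?_
      exact mul_le_mul hn1 hn2 (Real.sqrt_nonneg _) hnBC0
    -- finish
    rw [hinner (B x) x, hinner (C x) x]
    have hMB' : M * (‖R (B x)‖ * ‖R (Bs x)‖) + M * (‖R (C x)‖ * ‖R (Cs x)‖)
        ≤ M * (normAe A B C * normAe A Bs Cs) := by
      calc M * (‖R (B x)‖ * ‖R (Bs x)‖) + M * (‖R (C x)‖ * ‖R (Cs x)‖)
          = M * (‖R (B x)‖ * ‖R (Bs x)‖ + ‖R (C x)‖ * ‖R (Cs x)‖) := by ring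
        _ ≤ M * (normAe A B C * normAe A Bs Cs) :=
            mul_le_mul_of_nonneg_left hprod hM0
    have final : ‖α‖ * ‖⟪R x, R (B x)⟫‖^2
        + ‖α‖ * ‖⟪R x, R (C x)⟫‖^2 ≤ K := by
      linarith [hBz, hCz, hw1, hw2, hMB']
    calc (‖⟪R x, R (B x)⟫‖^2 + ‖⟪R x, R (C x)⟫‖^2) * ‖α‖
        = ‖α‖ * ‖⟪R x, R (B x)⟫‖^2
          + ‖α‖ * ‖⟪R x, R (C x)⟫‖^2 := by ring
      _ ≤ K := final
  have hwAe0 : 0 ≤ wAe A B C := by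
    apply Real.sSup_nonneg
    rintro r ⟨y, hy, rfl⟩; positivity
  calc (wAe A B C)^2 ≤ (Real.sqrt (K / ‖α‖))^2 :=
        pow_le_pow_left₀ hwAe0 hsup 2
    _ = K / ‖α‖ := Real.sq_sqrt hKd0
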